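/- Let 0 < μ < L and 0 ≤ d ≤ 2μ(L − μ)/L, and set ξ₁ = μ − d(L − μ)/(2(L − μ) − d) and ξ₂ = μ + dμ/(2μ − d). Then for ξ ∈ [0, L], the supremum over P ∈ P(μ,d,L) of ∫ min{ξ, x} dP(x) equals: ξ, if ξ ∈ [0, ξ₁]; μ − d(L − ξ)/(2(L − μ)), if ξ ∈ [ξ₁, μ]; ξ − dξ/(2μ), if ξ ∈ [μ, ξ₂]; and μ, if ξ ∈ [ξ₂, L]. Moreover, this supremum is attained by some P ∈ P(μ,d,L). -/

import Mathlib

open MeasureTheory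

/-- `P(μ,d,L)`: Borel probability measures supported in `[0,L]` with mean `μ`
and mean absolute deviation `d`. -/
def PmdL (μ d L : ℝ) : Set (Measure ℝ) :=
  {P | IsProbabilityMeasure P ∧ P (Set.Icc 0 L) = 1 ∧
       (∫ x, x ∂P) = μ ∧ (∫ x, |x - μ| ∂P) = d}

open Measure in
lemma aux_integrable_dirac {f : ℝ → ℝ} (hf : Measurable f) (a : ℝ) :
    Integrable f (dirac a) := by
  refine ⟨hf.aestronglyMeasurable, ?_⟩
  rw [HasFiniteIntegral, lintegral_dirac' a (by measurability)]
  exact ENNReal.coe_lt_top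

/-- Two point measure: mass `1-p` at `a`, mass `p` at `b`. -/
noncomputable def twoPoint (p a b : ℝ) : Measure ℝ :=
  ENNReal.ofReal (1-p) • Measure.dirac a + ENNReal.ofReal p • Measure.dirac b

lemma twoPoint_prob (p a b : ℝ) (hp0 : 0 ≤ p) (hp1 : p ≤ 1) :
    IsProbabilityMeasure (twoPoint p a b) := by
  constructor
  simp only [twoPoint, Measure.add_apply, Measure.smul_apply, measure_univ,
    smul_eq_mul, mul_one]
  rw [← ENNReal.ofReal_add (by linarith) hp0]
  norm_num

lemma twoPoint_apply (p a b L : ℝ) (ha : a ∈ Set.Icc 0 L) (hb : b ∈ Set.Icc 0 L)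
    (hp0 : 0 ≤ p) (hp1 : p ≤ 1) : twoPoint p a b (Set.Icc 0 L) = 1 := by
  simp only [twoPoint, Measure.add_apply, Measure.smul_apply,
    Measure.dirac_apply_of_mem ha, Measure.dirac_apply_of_mem hb, smul_eq_mul, mul_one]
  rw [← ENNReal.ofReal_add (by linarith) hp0]
  norm_num

lemma twoPoint_integral (p a b : ℝ) (hp0 : 0 ≤ p) (hp1 : p ≤ 1)
    {f : ℝ → ℝ} (hf : Measurable f) :
    ∫ x, f x ∂(twoPoint p a b) = (1-p) * f a + p * f b := by
  rw [twoPoint, integral_add_measure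
      ((aux_integrable_dirac hf a).smul_measure ENNReal.ofReal_ne_top)
      ((aux_integrable_dirac hf b).smul_measure ENNReal.ofReal_ne_top),
    integral_smul_measure, integral_smul_measure, integral_dirac, integral_dirac,
    ENNReal.toReal_ofReal (by linarith : (0:ℝ) ≤ 1 - p), ENNReal.toReal_ofReal hp0,
    smul_eq_mul, smul_eq_mul]

lemma twoPoint_mem (μ d L p a b : ℝ) (hp0 : 0 ≤ p) (hp1 : p ≤ 1)
    (ha : a ∈ Set.Icc 0 L) (hb : b ∈ Set.Icc 0 L)
    (hmean : (1-p) * a + p * b = μ) (hmad : (1-p) * |a - μ| + p * |b - μ| = d) :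
    twoPoint p a b ∈ PmdL μ d L := by
  refine ⟨twoPoint_prob p a b hp0 hp1, twoPoint_apply p a b L ha hb hp0 hp1, ?_, ?_⟩
  · rw [twoPoint_integral p a b hp0 hp1 (f := fun x => x) measurable_id]; exact hmean
  · rw [twoPoint_integral p a b hp0 hp1 (f := fun x => |x - μ|)
      ((measurable_id'.sub measurable_const).abs)]
    exact hmad

lemma ub_lemma (μ d L ξ : ℝ) (P : Measure ℝ) (hP : P ∈ PmdL μ d L)
    (c₀ c₁ c₂ : ℝ)
    (hpt : ∀ x, 0 ≤ x → x ≤ L → min ξ x ≤ c₀ + c₁ * x + c₂ * |x - μ|) :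
    ∫ x, min ξ x ∂P ≤ c₀ + c₁ * μ + c₂ * d := by
  obtain ⟨hprob, hsupp, hmean, hmad⟩ := hP
  haveI := hprob
  have hc : P (Set.Icc 0 L)ᶜ = 0 := by
    rw [measure_compl measurableSet_Icc (measure_ne_top P _), hsupp, measure_univ, tsub_self]
  have hae : ∀ᵐ x ∂P, x ∈ Set.Icc 0 L := mem_ae_iff.mpr hc
  have h1 : Integrable (fun x => x) P := by
    refine Integrable.mono' (integrable_const L) aestronglyMeasurable_id ?_
    filter_upwards [hae] with x hx
    rw [Real.norm_eq_abs, abs_of_nonneg hx.1]; exact hx.2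
  have h2 : Integrable (fun x => |x - μ|) P := by
    refine Integrable.mono' (integrable_const (L + |μ|))
      ((continuous_abs.comp (continuous_id.sub continuous_const)).aestronglyMeasurable) ?_
    filter_upwards [hae] with x hx
    rw [Real.norm_eq_abs, abs_abs]
    calc |x - μ| ≤ |x| + |μ| := abs_sub _ _
    _ ≤ L + |μ| := by rw [abs_of_nonneg hx.1]; linarith [hx.2]
  have h3 : Integrable (fun x => min ξ x) P := by
    refine Integrable.mono' (integrable_const (|ξ| + L))
      ((continuous_const.min continuous_id).aestronglyMeasurable) ?_
    filter_upwards [hae] with x hx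
    rw [Real.norm_eq_abs]
    rcases le_total ξ x with h | h
    · rw [min_eq_left h]
      calc |ξ| ≤ |ξ| := le_refl _
      _ ≤ |ξ| + L := by linarith [hx.1, hx.2]
    · rw [min_eq_right h, abs_of_nonneg hx.1]
      linarith [abs_nonneg ξ, hx.2]
  have h4 : Integrable (fun x => c₀ + c₁ * x + c₂ * |x - μ|) P :=
    ((integrable_const c₀).add (h1.const_mul c₁)).add (h2.const_mul c₂)
  calc ∫ x, min ξ x ∂P ≤ ∫ x, (c₀ + c₁ * x + c₂ * |x - μ|) ∂P :=
        integral_mono_ae h3 h4 (by filter_upwards [hae] with x hx; exact hpt x hx.1 hx.2)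
  _ = c₀ + c₁ * μ + c₂ * d := by
      have e1 : ∫ x, (c₀ + c₁ * x + c₂ * |x - μ|) ∂P
          = (∫ x, (c₀ + c₁ * x) ∂P) + ∫ x, c₂ * |x - μ| ∂P :=
        integral_add ((integrable_const c₀).add (h1.const_mul c₁)) (h2.const_mul c₂)
      have e2 : ∫ x, (c₀ + c₁ * x) ∂P = (∫ _x, c₀ ∂P) + ∫ x, c₁ * x ∂P :=
        integral_add (integrable_const c₀) (h1.const_mul c₁)
      rw [e1, e2, MeasureTheory.integral_const_mul, MeasureTheory.integral_const_mul,
        hmean, hmad, integral_const, probReal_univ, smul_eq_mul, one_mul]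

set_option maxHeartbeats 2000000 in
theorem stmt13 (μ d L ξ : ℝ) (hμ : 0 < μ) (hμL : μ < L) (hd0 : 0 ≤ d)
    (hd : d ≤ 2 * μ * (L - μ) / L) (hξ0 : 0 ≤ ξ) (hξL : ξ ≤ L) :
    (ξ ≤ μ - d * (L - μ) / (2 * (L - μ) - d) →
      IsGreatest ((fun P => ∫ x, min ξ x ∂P) '' PmdL μ d L) ξ) ∧
    (μ - d * (L - μ) / (2 * (L - μ) - d) ≤ ξ → ξ ≤ μ →
      IsGreatest ((fun P => ∫ x, min ξ x ∂P) '' PmdL μ d L)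
        (μ - d * (L - ξ) / (2 * (L - μ)))) ∧
    (μ ≤ ξ → ξ ≤ μ + d * μ / (2 * μ - d) →
      IsGreatest ((fun P => ∫ x, min ξ x ∂P) '' PmdL μ d L)
        (ξ - d * ξ / (2 * μ))) ∧
    (μ + d * μ / (2 * μ - d) ≤ ξ →
      IsGreatest ((fun P => ∫ x, min ξ x ∂P) '' PmdL μ d L) μ) := by
  have hL : (0:ℝ) < L := lt_trans hμ hμL
  have hLμ : (0:ℝ) < L - μ := by linarith
  have hdL : d * L ≤ 2 * μ * (L - μ) := by
    rw [← le_div_iff₀ hL] at *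
    exact hd
  have hd1 : d < 2 * (L - μ) := by nlinarith
  have hd2 : d < 2 * μ := by nlinarith
  have hden1 : (0:ℝ) < 2 * (L - μ) - d := by linarith
  have hden2 : (0:ℝ) < 2 * μ - d := by linarith
  have hne1 : (2 * (L - μ) : ℝ) ≠ 0 := by positivity
  have hne2 : (2 * (L - μ) - d : ℝ) ≠ 0 := ne_of_gt hden1
  have hne3 : (2 * μ : ℝ) ≠ 0 := by positivity
  have hne4 : (2 * μ - d : ℝ) ≠ 0 := ne_of_gt hden2
  have hfmin : Measurable fun x : ℝ => min ξ x := measurable_const.min measurable_id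
  -- extremal measure P₁ : mass at a = ξ₁ and at L
  obtain ⟨q, hq_def⟩ : ∃ q : ℝ, q = d / (2 * (L - μ)) := ⟨_, rfl⟩
  obtain ⟨a, ha_def⟩ : ∃ a : ℝ, a = μ - d * (L - μ) / (2 * (L - μ) - d) := ⟨_, rfl⟩
  have hq0 : 0 ≤ q := hq_def ▸ div_nonneg hd0 (by linarith)
  have hq1 : q ≤ 1 := by rw [hq_def, div_le_one (by linarith)]; linarith
  have haμ : a ≤ μ := by
    have h : 0 ≤ d * (L - μ) / (2 * (L - μ) - d) := div_nonneg (by nlinarith) hden1.le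
    rw [ha_def]; linarith
  have ha0 : 0 ≤ a := by
    rw [ha_def, sub_nonneg, div_le_iff₀ hden1]
    nlinarith
  have haI : a ∈ Set.Icc 0 L := ⟨ha0, by linarith⟩
  have hLI : L ∈ Set.Icc 0 L := ⟨hL.le, le_refl L⟩
  have hP1 : twoPoint q a L ∈ PmdL μ d L := by
    refine twoPoint_mem μ d L q a L hq0 hq1 haI hLI ?_ ?_
    · rw [ha_def, hq_def]; field_simp; ring
    · rw [abs_of_nonpos (by linarith), abs_of_nonneg (by linarith), ha_def, hq_def]
      field_simp; ring
  have hval1 : ∫ x, min ξ x ∂(twoPoint q a L) = (1-q) * min ξ a + q * min ξ L :=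
    twoPoint_integral q a L hq0 hq1 hfmin
  -- extremal measure P₂ : mass 1-p₂ at 0 and p₂ at b
  obtain ⟨p₂, hp2_def⟩ : ∃ p : ℝ, p = 1 - d / (2 * μ) := ⟨_, rfl⟩
  obtain ⟨b, hb_def⟩ : ∃ b : ℝ, b = μ + d * μ / (2 * μ - d) := ⟨_, rfl⟩
  have hp20 : 0 ≤ p₂ := by
    rw [hp2_def, sub_nonneg, div_le_one (by linarith)]; linarith
  have hp21 : p₂ ≤ 1 := by
    have h : 0 ≤ d / (2 * μ) := div_nonneg hd0 (by linarith)
    rw [hp2_def]; linarith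
  have hbμ : μ ≤ b := by
    have h : 0 ≤ d * μ / (2 * μ - d) := div_nonneg (by nlinarith) hden2.le
    rw [hb_def]; linarith
  have hbL : b ≤ L := by
    rw [hb_def, ← sub_nonneg,
      show L - (μ + d * μ / (2 * μ - d))
         = (L * (2*μ - d) - μ*(2*μ-d) - d*μ) / (2*μ-d) by
        rw [eq_div_iff hne4, sub_mul, add_mul, div_mul_cancel₀ _ hne4]; ring]
    apply div_nonneg _ hden2.le
    nlinarith
  have h0I : (0:ℝ) ∈ Set.Icc 0 L := ⟨le_refl 0, hL.le⟩
  have hbI : b ∈ Set.Icc 0 L := ⟨by linarith, hbL⟩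
  have hP2 : twoPoint p₂ 0 b ∈ PmdL μ d L := by
    refine twoPoint_mem μ d L p₂ 0 b hp20 hp21 h0I hbI ?_ ?_
    · rw [hb_def, hp2_def]; field_simp; ring
    · rw [abs_of_nonpos (by linarith : (0:ℝ) - μ ≤ 0),
        abs_of_nonneg (by linarith : 0 ≤ b - μ), hb_def, hp2_def]
      field_simp; ring
  have hval2 : ∫ x, min ξ x ∂(twoPoint p₂ 0 b) = (1-p₂) * min ξ 0 + p₂ * min ξ b :=
    twoPoint_integral p₂ 0 b hp20 hp21 hfmin
  refine ⟨?_, ?_, ?_, ?_⟩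
  · -- regime 1 : ξ ≤ ξ₁
    intro hξa
    have hξa' : ξ ≤ a := by rw [ha_def]; exact hξa
    constructor
    · refine ⟨twoPoint q a L, hP1, ?_⟩
      show ∫ x, min ξ x ∂(twoPoint q a L) = ξ
      rw [hval1, min_eq_left hξa', min_eq_left hξL]
      ring
    · rintro v ⟨P, hP, rfl⟩
      show ∫ x, min ξ x ∂P ≤ ξ
      have key := ub_lemma μ d L ξ P hP ξ 0 0 (fun x _ _ => by
        simpa using min_le_left ξ x)
      linarith [key]
  · -- regime 2 : ξ₁ ≤ ξ ≤ μ
    intro haξ hξμ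
    have haξ' : a ≤ ξ := by rw [ha_def]; exact haξ
    constructor
    · refine ⟨twoPoint q a L, hP1, ?_⟩
      show ∫ x, min ξ x ∂(twoPoint q a L) = μ - d * (L - ξ) / (2 * (L - μ))
      rw [hval1, min_eq_right haξ', min_eq_left hξL, ha_def, hq_def]
      field_simp
      ring
    · rintro v ⟨P, hP, rfl⟩
      show ∫ x, min ξ x ∂P ≤ μ - d * (L - ξ) / (2 * (L - μ))
      have key := ub_lemma μ d L ξ P hP (μ*(L-ξ)/(2*(L-μ))) ((L+ξ-2*μ)/(2*(L-μ)))
        ((ξ-L)/(2*(L-μ))) ?_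
      · have heq : μ*(L-ξ)/(2*(L-μ)) + (L+ξ-2*μ)/(2*(L-μ)) * μ + (ξ-L)/(2*(L-μ)) * d
            = μ - d * (L - ξ) / (2 * (L - μ)) := by
          field_simp
          ring
        linarith [key]
      · intro x hx0 hxL
        rw [show μ*(L-ξ)/(2*(L-μ)) + (L+ξ-2*μ)/(2*(L-μ)) * x + (ξ-L)/(2*(L-μ)) * |x-μ|
            = (μ*(L-ξ) + (L+ξ-2*μ)*x + (ξ-L)*|x-μ|) / (2*(L-μ)) by ring,
          le_div_iff₀ (by linarith : (0:ℝ) < 2*(L-μ))]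
        rcases le_total x μ with h | h
        · rw [abs_of_nonpos (by linarith)]
          nlinarith [min_le_right ξ x, mul_nonneg (sub_nonneg.2 (min_le_right ξ x)) hLμ.le]
        · rw [abs_of_nonneg (by linarith), min_eq_left (by linarith : ξ ≤ x)]
          nlinarith [mul_nonneg (by linarith : (0:ℝ) ≤ μ - ξ) (by linarith : (0:ℝ) ≤ L - x)]
  · -- regime 3 : μ ≤ ξ ≤ ξ₂
    intro hμξ hξb
    have hξb' : ξ ≤ b := by rw [hb_def]; exact hξb
    constructor
    · refine ⟨twoPoint p₂ 0 b, hP2, ?_⟩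
      show ∫ x, min ξ x ∂(twoPoint p₂ 0 b) = ξ - d * ξ / (2 * μ)
      rw [hval2, min_eq_right hξ0, min_eq_left hξb', hp2_def]
      field_simp
      ring
    · rintro v ⟨P, hP, rfl⟩
      show ∫ x, min ξ x ∂P ≤ ξ - d * ξ / (2 * μ)
      have key := ub_lemma μ d L ξ P hP (ξ/2) (ξ/(2*μ)) (-(ξ/(2*μ))) ?_
      · have heq : ξ/2 + ξ/(2*μ) * μ + (-(ξ/(2*μ))) * d = ξ - d * ξ / (2 * μ) := by
          field_simp
          ring
        linarith [key]
      · intro x hx0 hxL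
        rw [show ξ/2 + ξ/(2*μ) * x + (-(ξ/(2*μ))) * |x-μ|
            = (ξ*μ + ξ*x - ξ*|x-μ|) / (2*μ) by field_simp; ring,
          le_div_iff₀ (by linarith : (0:ℝ) < 2*μ)]
        rcases le_total x μ with h | h
        · rw [abs_of_nonpos (by linarith)]
          nlinarith [mul_nonneg hx0 (by linarith : (0:ℝ) ≤ ξ - μ),
            mul_nonneg (sub_nonneg.2 (min_le_right ξ x)) hμ.le]
        · rw [abs_of_nonneg (by linarith)]
          nlinarith [mul_nonneg (sub_nonneg.2 (min_le_left ξ x)) hμ.le]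
  · -- regime 4 : ξ₂ ≤ ξ
    intro hbξ
    have hbξ' : b ≤ ξ := by rw [hb_def]; exact hbξ
    constructor
    · refine ⟨twoPoint p₂ 0 b, hP2, ?_⟩
      show ∫ x, min ξ x ∂(twoPoint p₂ 0 b) = μ
      rw [hval2, min_eq_right hξ0, min_eq_right hbξ', hp2_def, hb_def]
      field_simp
      ring
    · rintro v ⟨P, hP, rfl⟩
      show ∫ x, min ξ x ∂P ≤ μ
      have key := ub_lemma μ d L ξ P hP 0 1 0 (fun x hx0 _ => by
        simpa using min_le_right ξ x)
      linarith [key]
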